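/- Let S and A be finite nonempty sets, let d, n ≥ 1 be integers and λ > 0, B > 0, ζ ≥ 0 reals. Let P : S×A → Δ(S) be a probability transition (P(s′|s,a) ≥ 0, Σ_{s′}P(s′|s,a) = 1). Let φ̂ : S×A → ℝ^d with ‖φ̂(s,a)‖₂ ≤ 1 and ŵ : S → ℝ^d be such that P̂(s′|s,a) := ⟨φ̂(s,a), ŵ(s′)⟩ satisfies P̂(s′|s,a) ≥ 0 and Σ_{s′∈S} P̂(s′|s,a) ≤ 1 for all (s,a), and such that ‖Σ_{s′∈S} ŵ(s′)·l(s′)‖₂ ≤ √d for every l : S → [0,1]. Let μ be a distribution on S×A with Σ_{(s,a)} μ(s,a)·( Σ_{s′∈S} |P̂(s′|s,a) − P(s′|s,a)| )² ≤ ζ. Set Σ̂_μ := n·Σ_{(s,a)} μ(s,a)·φ̂(s,a)φ̂(s,a)ᵀ + λ·I_d and define ν on S×A by ν(s,a) := (1/|A|)·Σ_{(s̃,ã)} μ(s̃,ã)·P(s|s̃,ã) (note: ν is built from the true transition P). Let q′ be any distribution on S×A, π : S → Δ(A) a policy, and define the subprobability weight q(s,a) := Σ_{(s̃,ã)} q′(s̃,ã)·P̂(s|s̃,ã)·π(a|s).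 Then for every g : S×A → [0,B]: Σ_{(s,a)} q(s,a)·g(s,a) ≤ E_{(s̃,ã)∼q′}[ min{ ‖φ̂(s̃,ã)‖_{Σ̂_μ^{-1}} · √( 2n·|A|·E_{(s,a)∼ν}[g(s,a)²] + B²·λ·d + 2n·B²·ζ ), B } ]. -/

import Mathlib

open Finset Matrix

/-- Euclidean (ℓ²) norm of a finite-dimensional real vector. -/
noncomputable def l2norm {ι : Type*} [Fintype ι] (x : ι → ℝ) : ℝ :=
  Real.sqrt (∑ i, x i ^ 2)

/-- Matrix-weighted norm ‖x‖_M = √(xᵀ M x). -/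
noncomputable def matNorm {ι : Type*} [Fintype ι] (M : Matrix ι ι ℝ) (x : ι → ℝ) : ℝ :=
  Real.sqrt (x ⬝ᵥ M.mulVec x)

/-- Jensen-type inequality: for subprobability weights `w`,
`(∑ w f)² ≤ ∑ w f²`. -/
lemma sq_weighted_sum_le {ι : Type*} (s : Finset ι) (w f : ι → ℝ)
    (hw : ∀ i ∈ s, 0 ≤ w i) (hws : ∑ i ∈ s, w i ≤ 1) :
    (∑ i ∈ s, w i * f i) ^ 2 ≤ ∑ i ∈ s, w i * f i ^ 2 := by
  have h := Finset.sum_mul_sq_le_sq_mul_sq s (fun i => Real.sqrt (w i))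
    (fun i => Real.sqrt (w i) * f i)
  have e1 : ∑ i ∈ s, Real.sqrt (w i) * (Real.sqrt (w i) * f i) = ∑ i ∈ s, w i * f i :=
    Finset.sum_congr rfl fun i hi => by rw [← mul_assoc, Real.mul_self_sqrt (hw i hi)]
  have e2 : ∑ i ∈ s, Real.sqrt (w i) ^ 2 = ∑ i ∈ s, w i :=
    Finset.sum_congr rfl fun i hi => Real.sq_sqrt (hw i hi)
  have e3 : ∑ i ∈ s, (Real.sqrt (w i) * f i) ^ 2 = ∑ i ∈ s, w i * f i ^ 2 :=
    Finset.sum_congr rfl fun i hi => by rw [mul_pow, Real.sq_sqrt (hw i hi)]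
  rw [e1, e2, e3] at h
  have hnn : 0 ≤ ∑ i ∈ s, w i * f i ^ 2 :=
    Finset.sum_nonneg fun i hi => mul_nonneg (hw i hi) (sq_nonneg _)
  nlinarith [h, hws, hnn]

/-- Cauchy–Schwarz for a symmetric positive semidefinite bilinear form given by a matrix. -/
lemma bilin_cs {ι : Type*} [Fintype ι] (M : Matrix ι ι ℝ)
    (hsym : ∀ u v : ι → ℝ, u ⬝ᵥ M *ᵥ v = v ⬝ᵥ M *ᵥ u)
    (hnn : ∀ u : ι → ℝ, 0 ≤ u ⬝ᵥ M *ᵥ u) (x y : ι → ℝ) :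
    (x ⬝ᵥ M *ᵥ y) ^ 2 ≤ (x ⬝ᵥ M *ᵥ x) * (y ⬝ᵥ M *ᵥ y) := by
  have hq : ∀ t : ℝ, 0 ≤ (x ⬝ᵥ M *ᵥ x) * (t * t) + (2 * (x ⬝ᵥ M *ᵥ y)) * t
      + (y ⬝ᵥ M *ᵥ y) := by
    intro t
    have h0 := hnn (t • x + y)
    have hexp : (t • x + y) ⬝ᵥ M *ᵥ (t • x + y)
        = (x ⬝ᵥ M *ᵥ x) * (t * t) + (2 * (x ⬝ᵥ M *ᵥ y)) * t + (y ⬝ᵥ M *ᵥ y) := by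
      rw [Matrix.mulVec_add, Matrix.mulVec_smul]
      simp only [dotProduct_add, add_dotProduct, dotProduct_smul, smul_dotProduct,
        smul_eq_mul]
      rw [hsym y x]
      ring
    linarith [hexp ▸ h0]
  have hd := discrim_le_zero hq
  rw [discrim] at hd
  nlinarith [hd]

set_option maxHeartbeats 1000000

/-- One-step back inequality for the learned low-rank transition model. -/
theorem one_step_back_learned_model
    {S A : Type*} [Fintype S] [Nonempty S] [Fintype A] [Nonempty A]
    {d n : ℕ} (hd : 1 ≤ d) (hn : 1 ≤ n)
    {lam B ζ : ℝ} (hlam : 0 < lam) (hB : 0 < B) (hζ : 0 ≤ ζ)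
    (P : S × A → S → ℝ) (hPpos : ∀ p s', 0 ≤ P p s') (hPsum : ∀ p, ∑ s', P p s' = 1)
    (φhat : S × A → Fin d → ℝ) (hφhat : ∀ p, l2norm (φhat p) ≤ 1)
    (what : S → Fin d → ℝ)
    (Phat : S × A → S → ℝ) (hPhat : ∀ p s', Phat p s' = ∑ j, φhat p j * what s' j)
    (hPhatpos : ∀ p s', 0 ≤ Phat p s') (hPhatsum : ∀ p, ∑ s', Phat p s' ≤ 1)
    (hwhat : ∀ l : S → ℝ, (∀ s', l s' ∈ Set.Icc (0 : ℝ) 1) →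
      l2norm (fun j => ∑ s', what s' j * l s') ≤ Real.sqrt d)
    (μ : S × A → ℝ) (hμpos : ∀ p, 0 ≤ μ p) (hμsum : ∑ p, μ p = 1)
    (hμTV : ∑ p, μ p * (∑ s', |Phat p s' - P p s'|) ^ 2 ≤ ζ)
    (Sighat : Matrix (Fin d) (Fin d) ℝ)
    (hSighat : Sighat = (n : ℝ) • (∑ p, μ p • vecMulVec (φhat p) (φhat p)) +
      lam • (1 : Matrix (Fin d) (Fin d) ℝ))
    (ν : S × A → ℝ)
    (hν : ∀ p : S × A, ν p = (1 / (Fintype.card A : ℝ)) * ∑ p', μ p' * P p' p.1)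
    (q' : S × A → ℝ) (hq'pos : ∀ p, 0 ≤ q' p) (hq'sum : ∑ p, q' p = 1)
    (pol : S → A → ℝ) (hpolpos : ∀ s a, 0 ≤ pol s a) (hpolsum : ∀ s, ∑ a, pol s a = 1)
    (q : S × A → ℝ)
    (hq : ∀ p : S × A, q p = ∑ p', q' p' * Phat p' p.1 * pol p.1 p.2)
    (g : S × A → ℝ) (hg : ∀ p, g p ∈ Set.Icc (0 : ℝ) B) :
    (∑ p, q p * g p) ≤
      ∑ p, q' p *
        min (matNorm Sighat⁻¹ (φhat p) *
          Real.sqrt (2 * (n : ℝ) * (Fintype.card A : ℝ) * (∑ p', ν p' * g p' ^ 2)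
            + B ^ 2 * lam * d + 2 * (n : ℝ) * B ^ 2 * ζ)) B := by
  classical
  have hg0 : ∀ p, 0 ≤ g p := fun p => (hg p).1
  have hgB : ∀ p, g p ≤ B := fun p => (hg p).2
  set l : S → ℝ := fun s => ∑ a, pol s a * g (s, a) with hl
  have hl0 : ∀ s, 0 ≤ l s := fun s =>
    Finset.sum_nonneg fun a _ => mul_nonneg (hpolpos s a) (hg0 _)
  have hlB : ∀ s, l s ≤ B := by
    intro s
    calc l s ≤ ∑ a, pol s a * B :=
          Finset.sum_le_sum fun a _ => mul_le_mul_of_nonneg_left (hgB _) (hpolpos s a)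
      _ = B := by rw [← Finset.sum_mul, hpolsum s, one_mul]
  set θ : Fin d → ℝ := fun j => ∑ s, what s j * l s with hθ
  -- `φhat p' ⬝ᵥ θ = ∑ s, Phat p' s * l s`
  have hfθ : ∀ p', φhat p' ⬝ᵥ θ = ∑ s, Phat p' s * l s := by
    intro p'
    simp only [dotProduct, hθ, hPhat, Finset.mul_sum, Finset.sum_mul]
    rw [Finset.sum_comm]
    exact Finset.sum_congr rfl fun s _ => Finset.sum_congr rfl fun j _ => by ring
  -- quadratic form of Sighat
  have quad : ∀ x y : Fin d → ℝ, x ⬝ᵥ Sighat *ᵥ y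
      = (n : ℝ) * ∑ p, μ p * ((φhat p ⬝ᵥ x) * (φhat p ⬝ᵥ y)) + lam * (x ⬝ᵥ y) := by
    intro x y
    rw [hSighat, Matrix.add_mulVec, Matrix.smul_mulVec, Matrix.smul_mulVec,
      Matrix.one_mulVec, dotProduct_add, dotProduct_smul, dotProduct_smul,
      smul_eq_mul, smul_eq_mul]
    congr 1
    congr 1
    have hent : ∀ i : Fin d, ((∑ p, μ p • vecMulVec (φhat p) (φhat p)) *ᵥ y) i
        = ∑ p, μ p * φhat p i * (φhat p ⬝ᵥ y) := by
      intro i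
      simp only [Matrix.mulVec, dotProduct, Matrix.sum_apply, Matrix.smul_apply,
        Matrix.vecMulVec_apply, smul_eq_mul, Finset.sum_mul, Finset.mul_sum]
      rw [Finset.sum_comm]
      exact Finset.sum_congr rfl fun p _ => Finset.sum_congr rfl fun j _ => by ring
    show ∑ i, x i * ((∑ p, μ p • vecMulVec (φhat p) (φhat p)) *ᵥ y) i = _
    simp_rw [hent, Finset.mul_sum]
    rw [Finset.sum_comm]
    refine Finset.sum_congr rfl fun p _ => ?_
    have : (φhat p ⬝ᵥ x) = ∑ i, φhat p i * x i := rfl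
    rw [this, Finset.sum_mul, Finset.mul_sum]
    exact Finset.sum_congr rfl fun i _ => by ring
  have hsym : ∀ u v : Fin d → ℝ, u ⬝ᵥ Sighat *ᵥ v = v ⬝ᵥ Sighat *ᵥ u := by
    intro u v
    rw [quad, quad, dotProduct_comm]
    congr 2
    exact Finset.sum_congr rfl fun p _ => by ring
  have hFnn : ∀ u : Fin d → ℝ, 0 ≤ u ⬝ᵥ Sighat *ᵥ u := by
    intro u
    rw [quad]
    have h1 : 0 ≤ (n : ℝ) * ∑ p, μ p * ((φhat p ⬝ᵥ u) * (φhat p ⬝ᵥ u)) :=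
      mul_nonneg (Nat.cast_nonneg n)
        (Finset.sum_nonneg fun p _ => mul_nonneg (hμpos p) (mul_self_nonneg _))
    have h2 : 0 ≤ u ⬝ᵥ u := Finset.sum_nonneg fun i _ => mul_self_nonneg _
    nlinarith [h1, h2, hlam]
  have hPD : Sighat.PosDef := by
    rw [Matrix.posDef_iff_dotProduct_mulVec]
    constructor
    · rw [Matrix.IsHermitian]
      ext i j
      rw [Matrix.conjTranspose_apply]
      have h1 := quad (Pi.single i 1) (Pi.single j 1)
      have h2 := quad (Pi.single j 1) (Pi.single i 1)
      have e : ∀ (u v : Fin d → ℝ), u ⬝ᵥ Sighat *ᵥ v = v ⬝ᵥ Sighat *ᵥ u := hsym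
      have key : ∀ (i j : Fin d), Sighat i j = (Pi.single i 1 : Fin d → ℝ) ⬝ᵥ Sighat *ᵥ (Pi.single j 1) := by
        intro i j
        simp [dotProduct, Matrix.mulVec, Pi.single_apply, Finset.sum_ite_eq',
          Finset.mul_sum]
      rw [star_trivial, key j i, key i j, e]
    · intro x hx
      have hsx : star x = x := funext fun i => star_trivial _
      rw [hsx, quad]
      have h1 : 0 ≤ (n : ℝ) * ∑ p, μ p * ((φhat p ⬝ᵥ x) * (φhat p ⬝ᵥ x)) :=
        mul_nonneg (Nat.cast_nonneg n)
          (Finset.sum_nonneg fun p _ => mul_nonneg (hμpos p) (mul_self_nonneg _))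
      have h2 : 0 < x ⬝ᵥ x := by
        obtain ⟨i, hi⟩ := Function.ne_iff.mp hx
        have : 0 < x i * x i := mul_self_pos.mpr hi
        exact Finset.sum_pos' (fun j _ => mul_self_nonneg _) ⟨i, Finset.mem_univ i, this⟩
      nlinarith [h1, h2, hlam]
  have hdet : IsUnit Sighat.det := isUnit_iff_ne_zero.2 hPD.det_pos.ne'
  -- Cauchy–Schwarz with Sighat⁻¹
  have hCS : ∀ x : Fin d → ℝ,
      (x ⬝ᵥ θ) ^ 2 ≤ (x ⬝ᵥ Sighat⁻¹ *ᵥ x) * (θ ⬝ᵥ Sighat *ᵥ θ) := by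
    intro x
    set y := Sighat⁻¹ *ᵥ x with hy
    have hxy : Sighat *ᵥ y = x := by
      rw [hy, Matrix.mulVec_mulVec, Matrix.mul_nonsing_inv _ hdet, Matrix.one_mulVec]
    have h1 : x ⬝ᵥ θ = y ⬝ᵥ Sighat *ᵥ θ := by
      rw [← hxy, dotProduct_comm, ← hsym θ y]
    have h2 : x ⬝ᵥ Sighat⁻¹ *ᵥ x = y ⬝ᵥ Sighat *ᵥ y := by
      calc x ⬝ᵥ Sighat⁻¹ *ᵥ x = x ⬝ᵥ y := by rw [hy]
        _ = y ⬝ᵥ x := dotProduct_comm _ _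
        _ = y ⬝ᵥ Sighat *ᵥ y := by rw [hxy]
    rw [h1, h2]
    exact bilin_cs Sighat hsym hFnn y θ
  -- bound on lam * θ⬝ᵥθ
  have hθnorm : θ ⬝ᵥ θ ≤ B ^ 2 * d := by
    have hw := hwhat (fun s => l s / B)
      (fun s => ⟨div_nonneg (hl0 s) hB.le, (div_le_one hB).2 (hlB s)⟩)
    have heq : (fun j => ∑ s, what s j * (l s / B)) = fun j => θ j / B := by
      funext j
      rw [hθ]
      simp only [Finset.sum_div]
      exact Finset.sum_congr rfl fun s _ => by ring
    rw [heq] at hw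
    unfold l2norm at hw
    have h0 : (0 : ℝ) ≤ ∑ j, (θ j / B) ^ 2 := Finset.sum_nonneg fun j _ => sq_nonneg _
    have h2 : ∑ j, (θ j / B) ^ 2 ≤ (d : ℝ) := by
      nlinarith [Real.sq_sqrt h0, Real.sq_sqrt (Nat.cast_nonneg d : (0:ℝ) ≤ (d:ℝ)),
        Real.sqrt_nonneg ((d : ℝ)), Real.sqrt_nonneg (∑ j, (θ j / B) ^ 2)]
    have h3 : θ ⬝ᵥ θ = B ^ 2 * ∑ j, (θ j / B) ^ 2 := by
      rw [dotProduct, Finset.mul_sum]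
      exact Finset.sum_congr rfl fun j _ => by field_simp
    rw [h3]
    exact mul_le_mul_of_nonneg_left h2 (sq_nonneg B)
  -- bound on the data-dependent term
  have hTp : ∀ p, (φhat p ⬝ᵥ θ) ^ 2
      ≤ 2 * (∑ s, P p s * (∑ a, pol s a * g (s, a) ^ 2))
        + 2 * B ^ 2 * (∑ s, |Phat p s - P p s|) ^ 2 := by
    intro p
    rw [hfθ p]
    set Ap := ∑ s, P p s * l s with hAp
    set Ep := ∑ s, (Phat p s - P p s) * l s with hEp
    have hsplit : ∑ s, Phat p s * l s = Ap + Ep := by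
      rw [hAp, hEp, ← Finset.sum_add_distrib]
      exact Finset.sum_congr rfl fun s _ => by ring
    have hA2 : Ap ^ 2 ≤ ∑ s, P p s * l s ^ 2 :=
      sq_weighted_sum_le Finset.univ (P p) l (fun s _ => hPpos p s) (le_of_eq (hPsum p))
    have hl2 : ∀ s, l s ^ 2 ≤ ∑ a, pol s a * g (s, a) ^ 2 := fun s =>
      sq_weighted_sum_le Finset.univ (pol s) (fun a => g (s, a))
        (fun a _ => hpolpos s a) (le_of_eq (hpolsum s))
    have hA3 : ∑ s, P p s * l s ^ 2 ≤ ∑ s, P p s * (∑ a, pol s a * g (s, a) ^ 2) :=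
      Finset.sum_le_sum fun s _ => mul_le_mul_of_nonneg_left (hl2 s) (hPpos p s)
    have hEabs : |Ep| ≤ B * ∑ s, |Phat p s - P p s| := by
      calc |Ep| ≤ ∑ s, |(Phat p s - P p s) * l s| := Finset.abs_sum_le_sum_abs _ _
        _ ≤ ∑ s, |Phat p s - P p s| * B := by
            refine Finset.sum_le_sum fun s _ => ?_
            rw [abs_mul, abs_of_nonneg (hl0 s)]
            exact mul_le_mul_of_nonneg_left (hlB s) (abs_nonneg _)
        _ = B * ∑ s, |Phat p s - P p s| := by rw [← Finset.sum_mul]; ring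
    have hE2 : Ep ^ 2 ≤ B ^ 2 * (∑ s, |Phat p s - P p s|) ^ 2 := by
      have h := mul_self_le_mul_self (abs_nonneg Ep) hEabs
      nlinarith [sq_abs Ep, h]
    rw [hsplit]
    nlinarith [sq_nonneg (Ap - Ep), hA2, hA3, hE2]
  have hνpos : ∀ p, 0 ≤ ν p := by
    intro p
    rw [hν]
    exact mul_nonneg (by positivity)
      (Finset.sum_nonneg fun p' _ => mul_nonneg (hμpos p') (hPpos p' _))
  have hcardA : (0 : ℝ) < (Fintype.card A : ℝ) := by
    exact_mod_cast Fintype.card_pos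
  have hνinv : ∀ s : S, ∀ a : A, ∑ p', μ p' * P p' s = (Fintype.card A : ℝ) * ν (s, a) := by
    intro s a
    rw [hν]
    field_simp
  have hpolle1 : ∀ s a, pol s a ≤ 1 := by
    intro s a
    calc pol s a ≤ ∑ a', pol s a' :=
          Finset.single_le_sum (fun a' _ => hpolpos s a') (Finset.mem_univ a)
      _ = 1 := hpolsum s
  have hXsum : ∑ p, μ p * (∑ s, P p s * (∑ a, pol s a * g (s, a) ^ 2))
      ≤ (Fintype.card A : ℝ) * ∑ p', ν p' * g p' ^ 2 := by
    have step1 : ∑ p, μ p * (∑ s, P p s * (∑ a, pol s a * g (s, a) ^ 2))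
        = ∑ s, (∑ p, μ p * P p s) * (∑ a, pol s a * g (s, a) ^ 2) := by
      have e1 : ∑ p, μ p * (∑ s, P p s * (∑ a, pol s a * g (s, a) ^ 2))
          = ∑ p, ∑ s, μ p * (P p s * (∑ a, pol s a * g (s, a) ^ 2)) :=
        Finset.sum_congr rfl fun p _ => Finset.mul_sum _ _ _
      rw [e1, Finset.sum_comm]
      refine Finset.sum_congr rfl fun s _ => ?_
      rw [Finset.sum_mul]
      exact Finset.sum_congr rfl fun p _ => by ring
    rw [step1]
    have step2 : ∀ s : S, (∑ p, μ p * P p s) * (∑ a, pol s a * g (s, a) ^ 2)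
        ≤ (Fintype.card A : ℝ) * ∑ a, ν (s, a) * g (s, a) ^ 2 := by
      intro s
      rw [Finset.mul_sum, Finset.mul_sum]
      refine Finset.sum_le_sum fun a _ => ?_
      rw [hνinv s a]
      have : (Fintype.card A : ℝ) * ν (s, a) * (pol s a * g (s, a) ^ 2)
          ≤ (Fintype.card A : ℝ) * ν (s, a) * (1 * g (s, a) ^ 2) := by
        refine mul_le_mul_of_nonneg_left ?_ (mul_nonneg hcardA.le (hνpos _))
        exact mul_le_mul_of_nonneg_right (hpolle1 s a) (sq_nonneg _)
      calc (Fintype.card A : ℝ) * ν (s, a) * (pol s a * g (s, a) ^ 2)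
          ≤ (Fintype.card A : ℝ) * ν (s, a) * (1 * g (s, a) ^ 2) := this
        _ = (Fintype.card A : ℝ) * (ν (s, a) * g (s, a) ^ 2) := by ring
    calc ∑ s, (∑ p, μ p * P p s) * (∑ a, pol s a * g (s, a) ^ 2)
        ≤ ∑ s, (Fintype.card A : ℝ) * ∑ a, ν (s, a) * g (s, a) ^ 2 :=
          Finset.sum_le_sum fun s _ => step2 s
      _ = (Fintype.card A : ℝ) * ∑ p', ν p' * g p' ^ 2 := by
          rw [← Finset.mul_sum, Fintype.sum_prod_type]
  -- the main bound for θ ⬝ᵥ Sighat *ᵥ θ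
  set D : ℝ := 2 * (n : ℝ) * (Fintype.card A : ℝ) * (∑ p', ν p' * g p' ^ 2)
      + B ^ 2 * lam * d + 2 * (n : ℝ) * B ^ 2 * ζ with hD
  have hThetaQuad : θ ⬝ᵥ Sighat *ᵥ θ ≤ D := by
    rw [quad]
    have hT : ∑ p, μ p * ((φhat p ⬝ᵥ θ) * (φhat p ⬝ᵥ θ))
        ≤ 2 * (∑ p, μ p * (∑ s, P p s * (∑ a, pol s a * g (s, a) ^ 2)))
          + 2 * B ^ 2 * (∑ p, μ p * (∑ s, |Phat p s - P p s|) ^ 2) := by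
      have e : 2 * (∑ p, μ p * (∑ s, P p s * (∑ a, pol s a * g (s, a) ^ 2)))
          + 2 * B ^ 2 * (∑ p, μ p * (∑ s, |Phat p s - P p s|) ^ 2)
          = ∑ p, (2 * (μ p * (∑ s, P p s * (∑ a, pol s a * g (s, a) ^ 2)))
              + 2 * B ^ 2 * (μ p * (∑ s, |Phat p s - P p s|) ^ 2)) := by
        rw [Finset.sum_add_distrib, ← Finset.mul_sum, ← Finset.mul_sum]
      rw [e]
      refine Finset.sum_le_sum fun p _ => ?_
      have h := mul_le_mul_of_nonneg_left (hTp p) (hμpos p)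
      linarith [h]
    have hn0 : (0 : ℝ) ≤ (n : ℝ) := Nat.cast_nonneg n
    have h1 : (n : ℝ) * ∑ p, μ p * ((φhat p ⬝ᵥ θ) * (φhat p ⬝ᵥ θ))
        ≤ (n : ℝ) * (2 * ((Fintype.card A : ℝ) * ∑ p', ν p' * g p' ^ 2) + 2 * B ^ 2 * ζ) := by
      refine mul_le_mul_of_nonneg_left ?_ hn0
      calc ∑ p, μ p * ((φhat p ⬝ᵥ θ) * (φhat p ⬝ᵥ θ))
          ≤ 2 * (∑ p, μ p * (∑ s, P p s * (∑ a, pol s a * g (s, a) ^ 2)))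
            + 2 * B ^ 2 * (∑ p, μ p * (∑ s, |Phat p s - P p s|) ^ 2) := hT
        _ ≤ 2 * ((Fintype.card A : ℝ) * ∑ p', ν p' * g p' ^ 2) + 2 * B ^ 2 * ζ := by
            have h3 := mul_le_mul_of_nonneg_left hμTV
              (by positivity : (0:ℝ) ≤ 2 * B ^ 2)
            linarith [hXsum, h3]
    have h2 : lam * (θ ⬝ᵥ θ) ≤ lam * (B ^ 2 * d) :=
      mul_le_mul_of_nonneg_left hθnorm hlam.le
    rw [hD]
    linarith [h1, h2]
  have hDnn : 0 ≤ D := le_trans (hFnn θ) hThetaQuad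
  -- rewrite the left-hand side
  have hLHS : ∑ p, q p * g p = ∑ p', q' p' * (φhat p' ⬝ᵥ θ) := by
    calc ∑ p, q p * g p
        = ∑ p : S × A, ∑ p', q' p' * Phat p' p.1 * pol p.1 p.2 * g p := by
          refine Finset.sum_congr rfl fun p _ => ?_
          rw [hq p, Finset.sum_mul]
      _ = ∑ p', ∑ p : S × A, q' p' * Phat p' p.1 * pol p.1 p.2 * g p :=
          Finset.sum_comm
      _ = ∑ p', q' p' * (φhat p' ⬝ᵥ θ) := by
          refine Finset.sum_congr rfl fun p' _ => ?_
          rw [hfθ p', Finset.mul_sum]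
          rw [show (∑ s, q' p' * (Phat p' s * l s))
              = ∑ s, ∑ a, q' p' * Phat p' s * pol s a * g (s, a) from
            Finset.sum_congr rfl fun s _ => by
              rw [show l s = ∑ a, pol s a * g (s, a) from rfl, Finset.mul_sum,
                Finset.mul_sum]
              exact Finset.sum_congr rfl fun a _ => by ring]
          rw [Fintype.sum_prod_type]
  rw [hLHS]
  refine Finset.sum_le_sum fun p' _ => ?_
  refine mul_le_mul_of_nonneg_left (le_min ?_ ?_) (hq'pos p')
  · -- φhat p' ⬝ᵥ θ ≤ matNorm Sighat⁻¹ (φhat p') * √D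
    have hc : 0 ≤ φhat p' ⬝ᵥ Sighat⁻¹ *ᵥ φhat p' := by
      have := hPD.inv.posSemidef.dotProduct_mulVec_nonneg (φhat p')
      rwa [show star (φhat p') = φhat p' from funext fun i => star_trivial _] at this
    have hCS2 : (φhat p' ⬝ᵥ θ) ^ 2 ≤ (φhat p' ⬝ᵥ Sighat⁻¹ *ᵥ φhat p') * D := by
      calc (φhat p' ⬝ᵥ θ) ^ 2
          ≤ (φhat p' ⬝ᵥ Sighat⁻¹ *ᵥ φhat p') * (θ ⬝ᵥ Sighat *ᵥ θ) := hCS (φhat p')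
        _ ≤ (φhat p' ⬝ᵥ Sighat⁻¹ *ᵥ φhat p') * D := mul_le_mul_of_nonneg_left hThetaQuad hc
    calc φhat p' ⬝ᵥ θ ≤ |φhat p' ⬝ᵥ θ| := le_abs_self _
      _ = Real.sqrt ((φhat p' ⬝ᵥ θ) ^ 2) := (Real.sqrt_sq_eq_abs _).symm
      _ ≤ Real.sqrt ((φhat p' ⬝ᵥ Sighat⁻¹ *ᵥ φhat p') * D) := Real.sqrt_le_sqrt hCS2
      _ = matNorm Sighat⁻¹ (φhat p') * Real.sqrt D := by
          rw [Real.sqrt_mul hc]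
          rfl
  · -- φhat p' ⬝ᵥ θ ≤ B
    rw [hfθ p']
    calc ∑ s, Phat p' s * l s ≤ ∑ s, Phat p' s * B :=
          Finset.sum_le_sum fun s _ => mul_le_mul_of_nonneg_left (hlB s) (hPhatpos p' s)
      _ = (∑ s, Phat p' s) * B := (Finset.sum_mul _ _ _).symm
      _ ≤ 1 * B := mul_le_mul_of_nonneg_right (hPhatsum p') hB.le
      _ = B := one_mul B
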